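/- Let τ ∈ (0, 1/4) with τ ≠ 1/12, and let b_* = (3(1−4τ))^{−1/3}. Then D(b_*) = −(12τ−1)³/(36(1−4τ)²), and the cubic polynomial u³ − R(b_*)u + D(b_*) has a real double root λ and a simple real root −2λ, where 2λ³ = D(b_*); in particular λ > 0 when 0 < τ < 1/12 and λ < 0 when 1/12 < τ < 1/4, so the repeated root is the largest root in the first case and the smallest root in the second case. -/

import Mathlib

noncomputable section

/-- The constant `c = −(243(1−4τ)²/64)^{1/3}` (real cube root). -/
def ccf (τ : ℝ) : ℝ := -(243 * (1 - 4 * τ) ^ 2 / 64) ^ ((1 : ℝ) / 3)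

/-- `R(z) = 3z⁴ − 3z − c`. -/
def RR (τ : ℝ) (z : ℂ) : ℂ := 3 * z ^ 4 - 3 * z - (ccf τ : ℂ)

/-- `D(z) = −2z⁶ + 3z³ + cz² − 3τ`. -/
def DD (τ : ℝ) (z : ℂ) : ℂ :=
  -2 * z ^ 6 + 3 * z ^ 3 + (ccf τ : ℂ) * z ^ 2 - 3 * (τ : ℂ)

/-- The quartic `q₁`. -/
def q1 (τ : ℝ) (z : ℂ) : ℂ :=
  ((256 / (3 : ℝ) ^ ((5 : ℝ) / 3) * (1 - 4 * τ) ^ ((1 : ℝ) / 3) : ℝ) : ℂ) * z ^ 4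
    + (128 / 9 : ℂ) * z ^ 3
    + ((16 / (3 : ℝ) ^ ((1 : ℝ) / 3) * (1 - 4 * τ) ^ ((2 : ℝ) / 3) : ℝ) : ℂ) * z ^ 2
    - ((32 * (3 : ℝ) ^ ((1 : ℝ) / 3) * (1 - 4 * τ) ^ ((1 : ℝ) / 3) : ℝ) : ℂ) * z
    + ((16 * (1 - 8 * τ) : ℝ) : ℂ)

/-- The linear factor `q₂`. -/
def q2 (τ : ℝ) (z : ℂ) : ℂ :=
  (((3 : ℝ) ^ ((1 : ℝ) / 3) * (1 - 4 * τ) ^ ((1 : ℝ) / 3) : ℝ) : ℂ) * z - 1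

/-- The double point `b_* = (3(1−4τ))^{−1/3}`. -/
def bstar (τ : ℝ) : ℝ := (3 * (1 - 4 * τ)) ^ (-(1 : ℝ) / 3)

/-- Let `τ ∈ (0,1/4)`, `τ ≠ 1/12`, and `b_* = (3(1−4τ))^{−1/3}`. Then
`D(b_*) = −(12τ−1)³/(36(1−4τ)²)`, and the cubic `u³ − R(b_*)u + D(b_*)` has a real double
root `λ` and a simple real root `−2λ` with `2λ³ = D(b_*)`; in particular `λ > 0` when
`0 < τ < 1/12` and `λ < 0` when `1/12 < τ < 1/4`. -/
theorem double_root_at_bstar (τ : ℝ) (hτ : τ ∈ Set.Ioo (0 : ℝ) (1 / 4))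
    (hτ' : τ ≠ 1 / 12) :
    DD τ ((bstar τ : ℝ) : ℂ) = -(((12 * τ - 1) ^ 3 / (36 * (1 - 4 * τ) ^ 2) : ℝ) : ℂ) ∧
    ∃ lam : ℝ, 2 * ((lam : ℝ) : ℂ) ^ 3 = DD τ ((bstar τ : ℝ) : ℂ) ∧
      (∀ u : ℂ, u ^ 3 - RR τ ((bstar τ : ℝ) : ℂ) * u + DD τ ((bstar τ : ℝ) : ℂ)
        = (u - ((lam : ℝ) : ℂ)) ^ 2 * (u + 2 * ((lam : ℝ) : ℂ))) ∧
      (τ < 1 / 12 → 0 < lam) ∧ (1 / 12 < τ → lam < 0) := by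
  obtain ⟨hτ0, hτ4⟩ := hτ
  have ha : (0:ℝ) < 1 - 4 * τ := by linarith
  have h3a : (0:ℝ) < 3 * (1 - 4 * τ) := by linarith
  set w : ℝ := (3 * (1 - 4 * τ)) ^ ((1:ℝ)/3) with hw_def
  have hw0 : 0 < w := Real.rpow_pos_of_pos h3a _
  have hwne : w ≠ 0 := ne_of_gt hw0
  have hw3 : w ^ 3 = 3 * (1 - 4 * τ) := by
    rw [hw_def, ← Real.rpow_natCast ((3*(1-4*τ)) ^ ((1:ℝ)/3)) 3, ← Real.rpow_mul h3a.le]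
    norm_num
  have hb : bstar τ = w⁻¹ := by
    have h : (-(1:ℝ))/3 = -(1/3 : ℝ) := by norm_num
    rw [bstar, h, Real.rpow_neg h3a.le, hw_def]
  have key : (3*w^2/4) ^ (3:ℕ) = 243 * (1 - 4*τ)^2/64 := by
    have : (3*w^2/4) ^ (3:ℕ) = 27*(w^3)^2/64 := by ring
    rw [this, hw3]; ring
  have hc : ccf τ = -(3*w^2/4) := by
    rw [ccf, ← key, ← Real.rpow_natCast (3*w^2/4) 3, ← Real.rpow_mul (by positivity)]
    norm_num
  set lam : ℝ := (1 - 12*τ)/(2*w^2) with hlam_def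
  -- real value of D at b_*
  have hDre : DD τ ((bstar τ : ℝ) : ℂ)
      = ((-2*(bstar τ)^6 + 3*(bstar τ)^3 + ccf τ*(bstar τ)^2 - 3*τ : ℝ) : ℂ) := by
    rw [DD]; push_cast; ring
  have hRre : RR τ ((bstar τ : ℝ) : ℂ)
      = ((3*(bstar τ)^4 - 3*(bstar τ) - ccf τ : ℝ) : ℂ) := by
    rw [RR]; push_cast; ring
  have hane : (1 - 4*τ) ≠ 0 := ne_of_gt ha
  have hDval : (-2*(bstar τ)^6 + 3*(bstar τ)^3 + ccf τ*(bstar τ)^2 - 3*τ : ℝ)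
      = 2 * lam ^ 3 := by
    rw [hb, hc, hlam_def]
    field_simp
    linear_combination (4*(12 - 3*(1+4*τ)*(w^3 + 3 - 12*τ))) * hw3
  have hDlam : 2 * lam ^ 3 = -((12 * τ - 1) ^ 3 / (36 * (1 - 4 * τ) ^ 2)) := by
    have hw6 : w ^ 6 = 9 * (1 - 4*τ)^2 := by
      have : w ^ 6 = (w^3)^2 := by ring
      rw [this, hw3]; ring
    rw [hlam_def]
    field_simp
    have h14 : (1 - τ * 4) ≠ 0 := by intro h; linarith
    rw [hw6]; field_simp; ring
  have hRval : (3*(bstar τ)^4 - 3*(bstar τ) - ccf τ : ℝ) = 3 * lam ^ 2 := by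
    rw [hb, hc, hlam_def]
    field_simp
    linear_combination (4*(w^3 - 1 - 12*τ)) * hw3
  constructor
  · rw [hDre, hDval, hDlam]; push_cast; ring
  · refine ⟨lam, ?_, ?_, ?_, ?_⟩
    · rw [hDre, hDval]; push_cast; ring
    · intro u
      rw [hDre, hDval, hRre, hRval]; push_cast; ring
    · intro h
      have : 0 < 1 - 12*τ := by linarith
      rw [hlam_def]; positivity
    · intro h
      have h1 : 1 - 12*τ < 0 := by linarith
      rw [hlam_def]
      apply div_neg_of_neg_of_pos h1
      positivity
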